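/- arXiv:1502.05640 — 3 statements merged into one kernel-verified Lean document; each statement's English description precedes it below -/
import Mathlib

section
/- Let K be a field and n ≥ 3 an integer. Consider the diagonal action of GL₂(K), via its induced action on P¹(K), on the set X_n(K) of n-tuples of pairwise distinct points of P¹(K). Then the map sending each (n−3)-tuple (t₁, …, t_{n−3}) of pairwise distinct elements of K \ {0, 1} to the orbit of the n-tuple ([0:1], [1:1], [1:0], [t₁:1], …, [t_{n−3}:1]) is a bijection from the set of such tuples onto the set of GL₂(K)-orbits of X_n(K). -/
open Projectivization

/-- The action of an invertible `2 × 2` matrix on the projective line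
`ℙ(K²)` (a Möbius transformation). -/
noncomputable def GLtwoToProj {K : Type*} [Field K] (g : GL (Fin 2) K) :
    Projectivization K (Fin 2 → K) → Projectivization K (Fin 2 → K) :=
  Projectivization.map
    ((LinearMap.GeneralLinearGroup.generalLinearEquiv K (Fin 2 → K))
        (Matrix.GeneralLinearGroup.toLin g)).toLinearMap
    (LinearEquiv.injective _)

/-- The point `[a : b]` of the projective line `P¹(K)`, for `(a, b) ≠ (0, 0)`. -/
noncomputable def projPt {K : Type*} [Field K] (a b : K) (h : a ≠ 0 ∨ b ≠ 0) :
    Projectivization K (Fin 2 → K) :=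
  Projectivization.mk K ![a, b] (by
    intro hab
    rcases h with h | h
    · exact h (by simpa using congrFun hab 0)
    · exact h (by simpa using congrFun hab 1))

/-- The `(m+3)`-tuple `([0:1], [1:1], [1:0], [t₁:1], …, [t_m:1])` of points of
`P¹(K)` attached to an `m`-tuple `t` of elements of `K`. -/
noncomputable def stdTuple {K : Type*} [Field K] {m : ℕ} (t : Fin m → K) :
    Fin (m + 3) → Projectivization K (Fin 2 → K) := fun i =>
  if h : (i : ℕ) < 3 then
    (if (i : ℕ) = 0 then projPt (0 : K) 1 (Or.inr one_ne_zero)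
     else if (i : ℕ) = 1 then projPt (1 : K) 1 (Or.inl one_ne_zero)
     else projPt (1 : K) 0 (Or.inl one_ne_zero))
  else projPt (t ⟨(i : ℕ) - 3, by have := i.isLt; omega⟩) 1 (Or.inr one_ne_zero)

section Helpers
variable {K : Type*} [Field K] {m : ℕ}

lemma vec_ne_zero (a b : K) (h : a ≠ 0 ∨ b ≠ 0) : ![a, b] ≠ 0 := by
  intro hab
  rcases h with h | h
  · exact h (by simpa using congrFun hab 0)
  · exact h (by simpa using congrFun hab 1)

lemma projPt_eq_iff (a b c d : K) (h : a ≠ 0 ∨ b ≠ 0) (h' : c ≠ 0 ∨ d ≠ 0) :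
    projPt a b h = projPt c d h' ↔ a * d = b * c := by
  rw [projPt, projPt, Projectivization.mk_eq_mk_iff]
  constructor
  · rintro ⟨u, hu⟩
    have h0 := congrFun hu 0
    have h1 := congrFun hu 1
    simp [Units.smul_def] at h0 h1
    rw [← h0, ← h1]; ring
  · intro hcross
    by_cases hd : d = 0
    · have hc : c ≠ 0 := h'.resolve_right (by simp [hd])
      have hb : b = 0 := by
        have : b * c = 0 := by rw [← hcross, hd, mul_zero]
        exact (mul_eq_zero.mp this).resolve_right hc
      have ha : a ≠ 0 := h.resolve_right (by simp [hb])
      refine ⟨Units.mk0 (a / c) (div_ne_zero ha hc), ?_⟩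
      funext i
      fin_cases i
      · simp [Units.smul_def]; field_simp
      · simp [Units.smul_def, hb, hd]
    · have hb0 : b ≠ 0 ∨ d = 0 → True := fun _ => trivial
      have hbne : b / d ≠ 0 ∨ b = 0 := by
        by_cases hb : b = 0
        · exact Or.inr hb
        · exact Or.inl (div_ne_zero hb hd)
      by_cases hb : b = 0
      · have ha : a ≠ 0 := h.resolve_right (by simp [hb])
        have : a * d = 0 := by rw [hcross, hb, zero_mul]
        exact absurd ((mul_eq_zero.mp this).resolve_left ha) hd
      · refine ⟨Units.mk0 (b / d) (div_ne_zero hb hd), ?_⟩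
        funext i
        fin_cases i
        · simp [Units.smul_def]
          field_simp
          linear_combination -hcross
        · simp [Units.smul_def]
          field_simp

lemma mulVec_pair (g : GL (Fin 2) K) (a b : K) :
    g.val.mulVec ![a, b] =
      ![g.val 0 0 * a + g.val 0 1 * b, g.val 1 0 * a + g.val 1 1 * b] := by
  funext i
  fin_cases i <;>
    simp [Matrix.mulVec, dotProduct, Fin.sum_univ_two]

lemma mulVec_pair_ne (g : GL (Fin 2) K) (a b : K) (h : a ≠ 0 ∨ b ≠ 0) :
    g.val 0 0 * a + g.val 0 1 * b ≠ 0 ∨ g.val 1 0 * a + g.val 1 1 * b ≠ 0 := by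
  by_contra hc
  push_neg at hc
  have hmv : g.val.mulVec ![a, b] = 0 := by
    rw [mulVec_pair]
    funext i
    fin_cases i <;> simp [hc.1, hc.2]
  have h1 : ((g⁻¹ * g : GL (Fin 2) K).val).mulVec ![a, b] = 0 := by
    rw [Matrix.GeneralLinearGroup.coe_mul, ← Matrix.mulVec_mulVec, hmv,
      Matrix.mulVec_zero]
  rw [inv_mul_cancel] at h1
  simp [Matrix.one_mulVec] at h1
  rcases h with h | h
  · exact h h1.1
  · exact h h1.2

lemma GLtwoToProj_projPt (g : GL (Fin 2) K) (a b : K) (h : a ≠ 0 ∨ b ≠ 0) :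
    GLtwoToProj g (projPt a b h) =
      projPt (g.val 0 0 * a + g.val 0 1 * b) (g.val 1 0 * a + g.val 1 1 * b)
        (mulVec_pair_ne g a b h) := by
  rw [GLtwoToProj, projPt, Projectivization.map_mk, projPt]
  have : ((LinearMap.GeneralLinearGroup.generalLinearEquiv K (Fin 2 → K))
        (Matrix.GeneralLinearGroup.toLin g)).toLinearMap ![a, b] =
      ![g.val 0 0 * a + g.val 0 1 * b, g.val 1 0 * a + g.val 1 1 * b] := by
    show g.val.mulVec ![a, b] = _
    exact mulVec_pair g a b
  congr 1

lemma exists_projPt (p : Projectivization K (Fin 2 → K)) :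
    ∃ (a b : K) (h : a ≠ 0 ∨ b ≠ 0), p = projPt a b h := by
  refine ⟨p.rep 0, p.rep 1, ?_, ?_⟩
  · by_contra hc
    push_neg at hc
    apply p.rep_nonzero
    funext i; fin_cases i
    · exact hc.1
    · exact hc.2
  · have : (![p.rep 0, p.rep 1] : Fin 2 → K) = p.rep := by
      funext i; fin_cases i <;> rfl
    rw [projPt]
    conv_lhs => rw [← p.mk_rep]
    congr 1
    exact this.symm

lemma stdTuple_at0 (t : Fin m → K) (i : Fin (m + 3)) (h0 : (i : ℕ) = 0) :
    stdTuple t i = projPt (0 : K) 1 (Or.inr one_ne_zero) := by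
  simp [stdTuple, h0]

lemma stdTuple_at1 (t : Fin m → K) (i : Fin (m + 3)) (h1 : (i : ℕ) = 1) :
    stdTuple t i = projPt (1 : K) 1 (Or.inl one_ne_zero) := by
  simp [stdTuple, h1]

lemma stdTuple_at2 (t : Fin m → K) (i : Fin (m + 3)) (h2 : (i : ℕ) = 2) :
    stdTuple t i = projPt (1 : K) 0 (Or.inl one_ne_zero) := by
  simp [stdTuple, h2]

lemma stdTuple_atge (t : Fin m → K) (i : Fin (m + 3)) (h3 : 3 ≤ (i : ℕ)) :
    stdTuple t i =
      projPt (t ⟨(i : ℕ) - 3, by have := i.isLt; omega⟩) 1 (Or.inr one_ne_zero) := by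
  have : ¬ (i : ℕ) < 3 := by omega
  simp [stdTuple, this]

lemma part1 (t : Fin m → K)
    (ht : Function.Injective t ∧ ∀ j, t j ≠ 0 ∧ t j ≠ 1) :
    Function.Injective (stdTuple t) := by
  intro i j hij
  have hcase : ∀ k : Fin (m + 3),
      (k : ℕ) = 0 ∨ (k : ℕ) = 1 ∨ (k : ℕ) = 2 ∨ 3 ≤ (k : ℕ) := by
    intro k; omega
  apply Fin.ext
  rcases hcase i with hi | hi | hi | hi <;> rcases hcase j with hj | hj | hj | hj
  · omega
  · rw [stdTuple_at0 t i hi, stdTuple_at1 t j hj, projPt_eq_iff] at hij; simp at hij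
  · rw [stdTuple_at0 t i hi, stdTuple_at2 t j hj, projPt_eq_iff] at hij; simp at hij
  · rw [stdTuple_at0 t i hi, stdTuple_atge t j hj, projPt_eq_iff] at hij
    simp at hij
    exact absurd hij.symm (ht.2 _).1
  · rw [stdTuple_at1 t i hi, stdTuple_at0 t j hj, projPt_eq_iff] at hij; simp at hij
  · omega
  · rw [stdTuple_at1 t i hi, stdTuple_at2 t j hj, projPt_eq_iff] at hij; simp at hij
  · rw [stdTuple_at1 t i hi, stdTuple_atge t j hj, projPt_eq_iff] at hij
    simp at hij
    exact absurd hij.symm (ht.2 _).2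
  · rw [stdTuple_at2 t i hi, stdTuple_at0 t j hj, projPt_eq_iff] at hij; simp at hij
  · rw [stdTuple_at2 t i hi, stdTuple_at1 t j hj, projPt_eq_iff] at hij; simp at hij
  · omega
  · rw [stdTuple_at2 t i hi, stdTuple_atge t j hj, projPt_eq_iff] at hij; simp at hij
  · rw [stdTuple_atge t i hi, stdTuple_at0 t j hj, projPt_eq_iff] at hij
    simp at hij
    exact absurd hij (ht.2 _).1
  · rw [stdTuple_atge t i hi, stdTuple_at1 t j hj, projPt_eq_iff] at hij
    simp at hij
    exact absurd hij (ht.2 _).2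
  · rw [stdTuple_atge t i hi, stdTuple_at2 t j hj, projPt_eq_iff] at hij; simp at hij
  · rw [stdTuple_atge t i hi, stdTuple_atge t j hj, projPt_eq_iff] at hij
    simp at hij
    have := ht.1 hij
    have := Fin.mk.injEq .. ▸ this
    simp only [Fin.ext_iff] at *
    omega

lemma GLtwoToProj_one (p : Projectivization K (Fin 2 → K)) :
    GLtwoToProj (1 : GL (Fin 2) K) p = p := by
  obtain ⟨a, b, h, rfl⟩ := exists_projPt p
  rw [GLtwoToProj_projPt, projPt_eq_iff]
  simp [Matrix.one_apply]
  ring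

lemma det_ne_zero (g : GL (Fin 2) K) : g.val.det ≠ 0 := by
  have : IsUnit g.val := ⟨g, rfl⟩
  exact ((Matrix.isUnit_iff_isUnit_det _).mp this).ne_zero

lemma part2 (t t' : Fin m → K)
    (ht : Function.Injective t ∧ ∀ j, t j ≠ 0 ∧ t j ≠ 1)
    (ht' : Function.Injective t' ∧ ∀ j, t' j ≠ 0 ∧ t' j ≠ 1) :
    (∃ g : GL (Fin 2) K, ∀ i, GLtwoToProj g (stdTuple t i) = stdTuple t' i)
      ↔ t = t' := by
  constructor
  · rintro ⟨g, hg⟩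
    have h0 := hg ⟨0, by omega⟩
    rw [stdTuple_at0 t _ rfl, stdTuple_at0 t' _ rfl, GLtwoToProj_projPt,
      projPt_eq_iff] at h0
    have h01 : g.val 0 1 = 0 := by linear_combination h0
    have h2 := hg ⟨2, by omega⟩
    rw [stdTuple_at2 t _ rfl, stdTuple_at2 t' _ rfl, GLtwoToProj_projPt,
      projPt_eq_iff] at h2
    have h10 : g.val 1 0 = 0 := by linear_combination -h2
    have h1 := hg ⟨1, by omega⟩
    rw [stdTuple_at1 t _ rfl, stdTuple_at1 t' _ rfl, GLtwoToProj_projPt,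
      projPt_eq_iff] at h1
    have hdiag : g.val 0 0 = g.val 1 1 := by linear_combination h1 - h01 + h10
    have hdet : g.val 0 0 * g.val 1 1 ≠ 0 := by
      have := det_ne_zero g
      rw [Matrix.det_fin_two, h01, h10] at this
      simpa using this
    have h00 : g.val 0 0 ≠ 0 := fun h => hdet (by rw [h, zero_mul])
    have h11 : g.val 1 1 ≠ 0 := fun h => hdet (by rw [h, mul_zero])
    funext j
    have hj := hg ⟨(j : ℕ) + 3, by omega⟩
    rw [stdTuple_atge t _ (by simp), stdTuple_atge t' _ (by simp),
      GLtwoToProj_projPt, projPt_eq_iff] at hj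
    have hjj : (⟨(j : ℕ) + 3 - 3, by omega⟩ : Fin m) = j := by
      apply Fin.ext; simp
    rw [hjj] at hj
    have key : g.val 1 1 * t j = g.val 1 1 * t' j := by
      linear_combination hj - h01 - (t j) * hdiag + (t j * t' j) * h10
    exact mul_left_cancel₀ h11 key
  · rintro rfl
    exact ⟨1, fun i => GLtwoToProj_one _⟩


lemma part3 (f : Fin (m + 3) → Projectivization K (Fin 2 → K))
    (hf : Function.Injective f) :
    ∃ t : Fin m → K,
      (Function.Injective t ∧ ∀ j, t j ≠ 0 ∧ t j ≠ 1) ∧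
      ∃ g : GL (Fin 2) K, ∀ i, GLtwoToProj g (stdTuple t i) = f i := by
  choose a b hab hfe using fun i => exists_projPt (f i)
  have hcr : ∀ i j : Fin (m + 3), i ≠ j → a i * b j ≠ b i * a j := by
    intro i j hij hc
    exact hij (hf (by rw [hfe i, hfe j, projPt_eq_iff]; exact hc))
  set i0 : Fin (m + 3) := ⟨0, by omega⟩ with hi0
  set i1 : Fin (m + 3) := ⟨1, by omega⟩ with hi1
  set i2 : Fin (m + 3) := ⟨2, by omega⟩ with hi2
  set α := a i1 * b i2 - b i1 * a i2 with hα
  set β := a i0 * b i1 - b i0 * a i1 with hβ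
  set d := a i0 * b i2 - b i0 * a i2 with hd
  have hαne : α ≠ 0 :=
    sub_ne_zero.mpr (hcr i1 i2 (by simp [hi1, hi2, Fin.ext_iff]))
  have hβne : β ≠ 0 :=
    sub_ne_zero.mpr (hcr i0 i1 (by simp [hi0, hi1, Fin.ext_iff]))
  have hdne : d ≠ 0 :=
    sub_ne_zero.mpr (hcr i0 i2 (by simp [hi0, hi2, Fin.ext_iff]))
  have hJ3 : ∀ j : Fin m, ((j : ℕ) + 3) < m + 3 := fun j => by omega
  set J : Fin m → Fin (m + 3) := fun j => ⟨(j : ℕ) + 3, hJ3 j⟩ with hJ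
  have hJ0 : ∀ j, J j ≠ i0 := fun j => by simp [hJ, hi0, Fin.ext_iff]
  have hJ1 : ∀ j, J j ≠ i1 := fun j => by simp [hJ, hi1, Fin.ext_iff]
  have hJ2 : ∀ j, J j ≠ i2 := fun j => by simp [hJ, hi2, Fin.ext_iff]
  set N : Fin m → K := fun j => α * (b (J j) * a i0 - a (J j) * b i0) with hN
  set D : Fin m → K := fun j => β * (a (J j) * b i2 - b (J j) * a i2) with hD
  have hDne : ∀ j, D j ≠ 0 := fun j =>
    mul_ne_zero hβne (sub_ne_zero.mpr (hcr (J j) i2 (hJ2 j)))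
  have hNne : ∀ j, N j ≠ 0 := fun j =>
    mul_ne_zero hαne (sub_ne_zero.mpr (Ne.symm (hcr (J j) i0 (hJ0 j))))
  set t : Fin m → K := fun j => N j / D j with ht
  have ht1 : ∀ j, t j ≠ 1 := by
    intro j h1
    have hND : N j = D j := by
      rw [ht] at h1
      exact (div_eq_one_iff_eq (hDne j)).mp h1
    have key : N j - D j = d * (a i1 * b (J j) - b i1 * a (J j)) := by
      rw [hN, hD, hα, hβ, hd]; ring
    have h0' : d * (a i1 * b (J j) - b i1 * a (J j)) = 0 := by
      rw [← key, hND, sub_self]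
    have := (mul_eq_zero.mp h0').resolve_left hdne
    exact hcr i1 (J j) (Ne.symm (hJ1 j)) (by linear_combination this)
  have htinj : Function.Injective t := by
    intro j k h
    rw [ht] at h
    have h' := (div_eq_div_iff (hDne j) (hDne k)).mp h
    have key2 : N j * D k - N k * D j =
        α * β * d * (b (J j) * a (J k) - a (J j) * b (J k)) := by
      rw [hN, hD, hα, hβ, hd]; ring
    have h0' : α * β * d * (b (J j) * a (J k) - a (J j) * b (J k)) = 0 := by
      linear_combination h' - key2
    have hsub := (mul_eq_zero.mp h0').resolve_left
      (mul_ne_zero (mul_ne_zero hαne hβne) hdne)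
    have hcross : a (J j) * b (J k) = b (J j) * a (J k) := by
      linear_combination -hsub
    have hJeq : J j = J k :=
      hf (by rw [hfe (J j), hfe (J k), projPt_eq_iff]; exact hcross)
    have : (j : ℕ) + 3 = (k : ℕ) + 3 := congrArg Fin.val hJeq
    exact Fin.ext (by omega)
  have ht0 : ∀ j, t j ≠ 0 := fun j => by
    rw [ht]; exact div_ne_zero (hNne j) (hDne j)
  set M : Matrix (Fin 2) (Fin 2) K :=
    !![β * a i2, α * a i0; β * b i2, α * b i0] with hM
  have hMdet : M.det ≠ 0 := by
    rw [hM, Matrix.det_fin_two_of]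
    have : β * a i2 * (α * b i0) - α * a i0 * (β * b i2) = -(α * β * d) := by
      rw [hd]; ring
    rw [this]
    exact neg_ne_zero.mpr (mul_ne_zero (mul_ne_zero hαne hβne) hdne)
  set g := Matrix.GeneralLinearGroup.mkOfDetNeZero M hMdet with hg
  have e00 : g.val 0 0 = β * a i2 := rfl
  have e01 : g.val 0 1 = α * a i0 := rfl
  have e10 : g.val 1 0 = β * b i2 := rfl
  have e11 : g.val 1 1 = α * b i0 := rfl
  refine ⟨t, ⟨htinj, fun j => ⟨ht0 j, ht1 j⟩⟩, g, ?_⟩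
  intro i
  have hcase : (i : ℕ) = 0 ∨ (i : ℕ) = 1 ∨ (i : ℕ) = 2 ∨ 3 ≤ (i : ℕ) := by omega
  rcases hcase with hi | hi | hi | hi
  · have hii : i = i0 := Fin.ext (by simp [hi0, hi])
    rw [hii, stdTuple_at0 t i0 rfl, GLtwoToProj_projPt, hfe i0, projPt_eq_iff,
      e00, e01, e10, e11]
    ring
  · have hii : i = i1 := Fin.ext (by simp [hi1, hi])
    rw [hii, stdTuple_at1 t i1 rfl, GLtwoToProj_projPt, hfe i1, projPt_eq_iff,
      e00, e01, e10, e11, hα, hβ]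
    ring
  · have hii : i = i2 := Fin.ext (by simp [hi2, hi])
    rw [hii, stdTuple_at2 t i2 rfl, GLtwoToProj_projPt, hfe i2, projPt_eq_iff,
      e00, e01, e10, e11]
    ring
  · have hj3 : (i : ℕ) - 3 < m := by have := i.isLt; omega
    set j : Fin m := ⟨(i : ℕ) - 3, hj3⟩ with hjdef
    have hJi : J j = i := Fin.ext (by simp [hJ, hjdef]; omega)
    rw [stdTuple_atge t i hi, GLtwoToProj_projPt, hfe i, projPt_eq_iff,
      e00, e01, e10, e11]
    have htj : t ⟨(i : ℕ) - 3, by have := i.isLt; omega⟩ = N j / D j := by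
      rw [ht]
    rw [htj]
    simp only [hN, hD]
    rw [hJi]
    have hD' : β * (a i * b i2 - b i * a i2) ≠ 0 := by
      have := hDne j
      simp only [hD] at this
      rw [hJi] at this
      exact this
    field_simp
    have hY : a i * b i2 - a i2 * b i ≠ 0 := by
      intro h; apply hD'
      rw [show a i * b i2 - b i * a i2 = a i * b i2 - a i2 * b i by ring, h, mul_zero]
    rw [div_add' _ _ _ hY, div_add' _ _ _ hY, mul_div_assoc', mul_div_assoc',
      div_eq_div_iff hY hY]
    ring

end Helpers

/-- For `n = m + 3 ≥ 3`, the map sending an `(n-3)`-tuple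
`(t₁, …, t_{n-3})` of pairwise distinct elements of `K \ {0,1}` to the
`GL₂(K)`-orbit of `([0:1], [1:1], [1:0], [t₁:1], …, [t_{n-3}:1])` is a
bijection onto the set of `GL₂(K)`-orbits of `n`-tuples of pairwise distinct
points of `P¹(K)`:  each such tuple `stdTuple t` consists of pairwise distinct
points, two valid parameter tuples lie in the same orbit iff they are equal
(injectivity on orbits), and every tuple of pairwise distinct points is in the
orbit of some `stdTuple t` (surjectivity onto orbits). -/
theorem moduli_M0n_points_bijection {K : Type*} [Field K] (m : ℕ) :
    (∀ t : Fin m → K,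
        (Function.Injective t ∧ ∀ j, t j ≠ 0 ∧ t j ≠ 1) →
        Function.Injective (stdTuple t)) ∧
    (∀ t t' : Fin m → K,
        (Function.Injective t ∧ ∀ j, t j ≠ 0 ∧ t j ≠ 1) →
        (Function.Injective t' ∧ ∀ j, t' j ≠ 0 ∧ t' j ≠ 1) →
        ((∃ g : GL (Fin 2) K, ∀ i, GLtwoToProj g (stdTuple t i) = stdTuple t' i)
          ↔ t = t')) ∧
    (∀ f : Fin (m + 3) → Projectivization K (Fin 2 → K),
        Function.Injective f →
        ∃ t : Fin m → K,
          (Function.Injective t ∧ ∀ j, t j ≠ 0 ∧ t j ≠ 1) ∧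
          ∃ g : GL (Fin 2) K, ∀ i, GLtwoToProj g (stdTuple t i) = f i) :=
  ⟨fun t ht => part1 t ht, fun t t' ht ht' => part2 t t' ht ht',
    fun f hf => part3 f hf⟩
end

section
/- Let R be a commutative ring and J an ideal of R. The extended Rees algebra A(J) equals the R-subalgebra of R[t, t⁻¹] generated by the element t together with the elements x·t⁻¹ for x ∈ J; that is, A(J) = Algebra.adjoin R ({t} ∪ {x·t⁻¹ : x ∈ J}). -/
open LaurentPolynomial

/-- The extended Rees algebra `A(J) = ⊕_{n ∈ ℤ} Jⁿ t^{-n} ⊆ R[t, t⁻¹]`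
(with `Jⁿ = R` for `n ≤ 0`), as a subset of the Laurent polynomial ring. -/
def extendedReesSet {R : Type*} [CommRing R] (J : Ideal R) :
    Set (LaurentPolynomial R) :=
  {f | ∀ m : ℤ, f.coeff m ∈ J ^ (-m).toNat}

namespace ExtReesAux

variable {R : Type*} [CommRing R] (J : Ideal R)

/-- The extended Rees set as a subalgebra. -/
def subalg : Subalgebra R (LaurentPolynomial R) where
  carrier := extendedReesSet J
  add_mem' hf hg m := by
    have := add_mem (hf m) (hg m)
    simpa using this
  mul_mem' {f g} hf hg m := by
    classical
    rw [AddMonoidAlgebra.coeff_mul]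
    refine Submodule.sum_mem _ fun a₁ _ => Submodule.sum_mem _ fun a₂ _ => ?_
    dsimp only
    split_ifs with h
    · have hle : (-m).toNat ≤ (-a₁).toNat + (-a₂).toNat := by omega
      refine Ideal.pow_le_pow_right hle ?_
      rw [pow_add]
      exact Ideal.mul_mem_mul (hf a₁) (hg a₂)
    · exact zero_mem _
  algebraMap_mem' r m := by
    classical
    rcases eq_or_ne m 0 with rfl | h
    · simp
    · have : (algebraMap R (LaurentPolynomial R) r).coeff m = 0 := by
        rw [LaurentPolynomial.algebraMap_apply, LaurentPolynomial.C_eq_algebraMap]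
        show (AddMonoidAlgebra.single (0 : ℤ) r).coeff m = 0
        rw [AddMonoidAlgebra.coeff_single, Finsupp.single_apply, if_neg (fun e => h e.symm)]
      rw [this]
      exact zero_mem _

lemma C_mul_T_neg_mem_adjoin {a : R} {k : ℕ} (ha : a ∈ J ^ k) :
    C a * T (-(k : ℤ)) ∈
      Algebra.adjoin R
        ({T 1} ∪ {y : LaurentPolynomial R | ∃ x ∈ J, y = C x * T (-1)}) := by
  induction k generalizing a with
  | zero =>
    simp only [Nat.cast_zero, neg_zero, T_zero, mul_one]
    rw [C_eq_algebraMap]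
    exact Subalgebra.algebraMap_mem _ _
  | succ k ih =>
    rw [pow_succ'] at ha
    refine Submodule.mul_induction_on ha ?_ ?_
    · intro x hx b hb
      have : C (x * b) * T (-(k + 1 : ℕ) : ℤ) =
          (C x * T (-1)) * (C b * T (-(k : ℤ))) := by
        have hT : ((-(k + 1 : ℕ) : ℤ)) = -1 + -(k : ℤ) := by push_cast; ring
        rw [hT, T_add, map_mul]
        ring
      rw [this]
      exact mul_mem (Algebra.subset_adjoin (Or.inr ⟨x, hx, rfl⟩)) (ih hb)
    · intro x y hx hy
      rw [map_add, add_mul]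
      exact add_mem hx hy

end ExtReesAux

/-- The extended Rees algebra `A(J)` is the `R`-subalgebra of
`R[t, t⁻¹]` generated by `t` together with the elements `x · t⁻¹` for `x ∈ J`. -/
theorem extendedReesSet_eq_adjoin {R : Type*} [CommRing R] (J : Ideal R) :
    extendedReesSet J =
      (Algebra.adjoin R
        ({T 1} ∪ {y : LaurentPolynomial R | ∃ x ∈ J, y = C x * T (-1)}) :
        Subalgebra R (LaurentPolynomial R)) := by
  apply le_antisymm
  · -- ⊆
    intro f hf
    rw [SetLike.mem_coe]
    have hrepr : f = ∑ n ∈ f.coeff.support, C (f.coeff n) * T n := by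
      conv_lhs => rw [← f.sum_coeff_single]
      rw [Finsupp.sum]
      exact Finset.sum_congr rfl fun n _ => single_eq_C_mul_T _ _
    rw [hrepr]
    refine Subalgebra.sum_mem _ fun n _ => ?_
    rcases le_or_gt 0 n with hn | hn
    · have hT : (T n : LaurentPolynomial R) = T 1 ^ n.toNat := by
        rw [T_pow]; congr 1; omega
      rw [hT, C_eq_algebraMap]
      have h1 : (T 1 : LaurentPolynomial R) ∈ Algebra.adjoin R
          ({T 1} ∪ {y : LaurentPolynomial R | ∃ x ∈ J, y = C x * T (-1)}) :=
        Algebra.subset_adjoin (Set.mem_union_left _ rfl)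
      exact mul_mem (Subalgebra.algebraMap_mem _ _) (pow_mem h1 _)
    · have hk : (T n : LaurentPolynomial R) = T (-(((-n).toNat : ℕ) : ℤ)) := by
        congr 1
        omega
      rw [hk]
      exact ExtReesAux.C_mul_T_neg_mem_adjoin J (hf n)
  · -- ⊇
    have : Algebra.adjoin R
        ({T 1} ∪ {y : LaurentPolynomial R | ∃ x ∈ J, y = C x * T (-1)}) ≤
        ExtReesAux.subalg J := by
      apply Algebra.adjoin_le
      rintro y (rfl | ⟨x, hx, rfl⟩)
      · intro m
        show (AddMonoidAlgebra.single (1 : ℤ) (1 : R)).coeff m ∈ _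
        rcases eq_or_ne m 1 with rfl | h
        · simp
        · rw [AddMonoidAlgebra.coeff_single, Finsupp.single_apply, if_neg (Ne.symm h)]
          exact zero_mem _
      · intro m
        show (C x * T (-1) : LaurentPolynomial R).coeff m ∈ J ^ (-m).toNat
        rw [← single_eq_C_mul_T]
        rcases eq_or_ne m (-1) with rfl | h
        · rw [AddMonoidAlgebra.coeff_single, Finsupp.single_apply, if_pos rfl]
          simpa using hx
        · rw [AddMonoidAlgebra.coeff_single, Finsupp.single_apply, if_neg (Ne.symm h)]
          exact zero_mem _
    exact this
end

section
/- Let R be a commutative ring and J an ideal of R, and let A(J) ⊆ R[t, t⁻¹] be the extended Rees algebra of J. Then an element f ∈ R[t, t⁻¹] lies in the principal ideal t·A(J) of A(J) if and only if for every integer m the coefficient of t^m in f lies in J^{max(1−m, 0)}. -/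
open LaurentPolynomial

/-- An element `f ∈ R[t, t⁻¹]` lies in the principal ideal
`t · A(J)` of the extended Rees algebra `A(J)` if and only if for every
integer `m` the coefficient of `t^m` in `f` lies in `J^{max(1-m, 0)}`. -/
theorem mem_t_mul_extendedReesSet_iff {R : Type*} [CommRing R] (J : Ideal R)
    (f : LaurentPolynomial R) :
    (∃ g ∈ extendedReesSet J, f = T 1 * g) ↔
      ∀ m : ℤ, f.coeff m ∈ J ^ (1 - m).toNat := by
  constructor
  · rintro ⟨g, hg, rfl⟩ m
    rw [show (T 1 : R[T;T⁻¹]) = AddMonoidAlgebra.single 1 1 from rfl, AddMonoidAlgebra.coeff_single_mul_apply, one_mul]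
    have := hg (-1 + m)
    rwa [show (-(-1 + m)).toNat = (1 - m).toNat by ring_nf] at this
  · intro h
    refine ⟨T (-1) * f, fun m => ?_, ?_⟩
    · rw [show (T (-1) : R[T;T⁻¹]) = AddMonoidAlgebra.single (-1) 1 from rfl, AddMonoidAlgebra.coeff_single_mul_apply, one_mul]
      have := h (1 + m)
      rw [show (1 - (1 + m)).toNat = (-m).toNat by ring_nf] at this
      rw [show (- -1 + m : ℤ) = 1 + m by ring]
      exact this
    · rw [← mul_assoc, ← T_add]
      norm_num
end
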